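/- Let p and q be distinct primes with p ≡ 1 (mod q), and let A be the cyclic group of order p²q. Then there is no regular subgroup G of Hol(A) such that the image π₂(G) has order pq. -/

import Mathlib

/-- The holomorph `Hol(A) = A ⋊ Aut(A)` of a group `A`. -/
abbrev Hol (A : Type*) [Group A] :=
  SemidirectProduct A (MulAut A) (MonoidHom.id (MulAut A))

/-- The natural action of an element `(a, f)` of `Hol(A)` on `A`: `(a, f) · x = a * f x`. -/
def holSmul {A : Type*} [Group A] (g : Hol A) (x : A) : A :=
  g.left * g.right x

section Aux
variable {N : ℕ} [NeZero N]

local notation "A" => Multiplicative (ZMod N)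

/-- value of an automorphism at the generator -/
def uval (F : MulAut A) : ZMod N := Multiplicative.toAdd (F (Multiplicative.ofAdd 1))

lemma uval_spec (F : MulAut A) (x : ZMod N) :
    Multiplicative.toAdd (F (Multiplicative.ofAdd x)) = uval F * x := by
  let F' : ZMod N →+ ZMod N := AddMonoidHom.mk'
    (fun y => Multiplicative.toAdd (F (Multiplicative.ofAdd y)))
    (by intro a b
        simp only [ofAdd_add, map_mul, toAdd_mul])
  have h1 : F' x = x * F' 1 := by
    have hx : x = (x.val : ZMod N) := by rw [ZMod.natCast_val, ZMod.cast_id]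
    rw [hx]
    have hsm : ((x.val : ℕ) : ZMod N) = (x.val : ℕ) • (1 : ZMod N) := by simp
    rw [hsm, map_nsmul, nsmul_eq_mul, ← hsm]
  simpa [F', mul_comm, uval] using h1

lemma uval_spec' (F : MulAut A) (x : A) :
    Multiplicative.toAdd (F x) = uval F * Multiplicative.toAdd x :=
  uval_spec F (Multiplicative.toAdd x)

lemma uval_mul (F G : MulAut A) : uval (F * G) = uval F * uval G := by
  have h : (F * G) (Multiplicative.ofAdd 1) = F (G (Multiplicative.ofAdd 1)) := rfl
  unfold uval
  rw [h]
  simpa [uval] using uval_spec' F (G (Multiplicative.ofAdd 1))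

omit [NeZero N] in
lemma uval_one : uval (1 : MulAut A) = 1 := by simp [uval]

lemma uval_inj {F G : MulAut A} (h : uval F = uval G) : F = G := by
  ext x
  have hx : x = Multiplicative.ofAdd (Multiplicative.toAdd x) := rfl
  rw [hx]
  apply Multiplicative.toAdd.injective
  rw [uval_spec, uval_spec, h]

/-- translation part of a holomorph element -/
def aA (g : Hol A) : ZMod N := Multiplicative.toAdd g.left

/-- unit (automorphism) part of a holomorph element, as a scalar -/
def uu (g : Hol A) : ZMod N := uval g.right

omit [NeZero N] in
lemma aA_one : aA (1 : Hol A) = 0 := by simp [aA]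

omit [NeZero N] in
lemma uu_one : uu (1 : Hol A) = 1 := by simp [uu, uval]

lemma aA_mul (g h : Hol A) : aA (g * h) = aA g + uu g * aA h := by
  show Multiplicative.toAdd (g.left * (MonoidHom.id (MulAut A) g.right) h.left) = _
  simp only [MonoidHom.id_apply, toAdd_mul]
  rw [uval_spec' g.right h.left]
  rfl

lemma uu_mul (g h : Hol A) : uu (g * h) = uu g * uu h := by
  show uval (g.right * h.right) = _
  rw [uval_mul]; rfl

lemma aA_inv (g : Hol A) : aA g⁻¹ = uu g⁻¹ * (- aA g) := by
  show Multiplicative.toAdd ((MonoidHom.id (MulAut A) g.right⁻¹) g.left⁻¹) = _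
  simp only [MonoidHom.id_apply]
  rw [uval_spec' g.right⁻¹ g.left⁻¹]
  simp [uu, aA]

lemma uu_inv_mul (g : Hol A) : uu g⁻¹ * uu g = 1 := by
  rw [← uu_mul, inv_mul_cancel, uu_one]

lemma uu_pow (g : Hol A) (j : ℕ) : uu (g ^ j) = uu g ^ j := by
  induction j with
  | zero => simp [uu_one]
  | succ j ih => rw [pow_succ, pow_succ, uu_mul, ih]

lemma aA_pow_mod {R : Type*} [CommRing R] (ψ : ZMod N →+* R) (g : Hol A)
    (hg : ψ (uu g) = 1) (j : ℕ) : ψ (aA (g ^ j)) = j * ψ (aA g) := by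
  induction j with
  | zero => simp [aA_one]
  | succ j ih =>
    rw [pow_succ, aA_mul, map_add, map_mul, ih, uu_pow, map_pow, hg]
    push_cast; ring

lemma holSmul_toAdd (g : Hol A) (x : ZMod N) :
    Multiplicative.toAdd (holSmul g (Multiplicative.ofAdd x)) = aA g + uu g * x := by
  unfold holSmul
  rw [toAdd_mul, uval_spec]
  rfl

lemma right_eq_one_of_uu {g : Hol A} (h : uu g = 1) : g.right = 1 := by
  apply uval_inj; rw [uval_one]; exact h

end Aux

lemma castHom_nat {m N : ℕ} [NeZero N] (h : m ∣ N) (x : ZMod N) :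
    ZMod.castHom h (ZMod m) x = ((x.val : ℕ) : ZMod m) := by
  conv_lhs => rw [show x = ((x.val : ℕ) : ZMod N) by rw [ZMod.natCast_val, ZMod.cast_id]]
  rw [map_natCast]

lemma dvd_val_iff {m N : ℕ} [NeZero N] (h : m ∣ N) (x : ZMod N) :
    ZMod.castHom h (ZMod m) x = 0 ↔ m ∣ x.val := by
  rw [castHom_nat h x, ZMod.natCast_eq_zero_iff]

lemma one_add_nilsq_pow {R : Type*} [CommRing R] (x : R) (hx : x ^ 2 = 0) (j : ℕ) :
    (1 + x) ^ j = 1 + (j : R) * x := by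
  induction j with
  | zero => simp
  | succ j ih =>
    rw [pow_succ, ih]
    push_cast
    linear_combination (j : R) * hx

/-- A subgroup `G ≤ Hol(A)` is regular if for all `x y : A` there is exactly one
`g ∈ G` with `g · x = y`. -/
def IsRegularSubgroup {A : Type*} [Group A] (G : Subgroup (Hol A)) : Prop :=
  ∀ x y : A, ∃! g : G, holSmul (g : Hol A) x = y

set_option maxHeartbeats 1600000 in
/-- Let `p, q` be distinct primes with `p ≡ 1 (mod q)` and let `A` be the cyclic group
of order `p²q`.  Then there is no regular subgroup `G ≤ Hol(A)` whose image under the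
projection `π₂ : Hol(A) → Aut(A)` has order `pq`. -/
theorem stmt_4 (p q : ℕ) (hp : p.Prime) (hq : q.Prime) (hpq : p ≠ q)
    (hmod : p ≡ 1 [MOD q]) :
    ¬ ∃ G : Subgroup (Hol (Multiplicative (ZMod (p ^ 2 * q)))),
        IsRegularSubgroup G ∧
        Nat.card (G.map SemidirectProduct.rightHom) = p * q := by
  rintro ⟨G, hreg, hcard⟩
  haveI hpf : Fact p.Prime := ⟨hp⟩
  haveI hqf : Fact q.Prime := ⟨hq⟩
  have hp2 := hp.two_le
  have hq2 := hq.two_le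
  haveI hNZ : NeZero (p ^ 2 * q) := ⟨by positivity⟩
  -- q < p
  have hqp : q < p := by
    have hdvd : q ∣ p - 1 := (Nat.modEq_iff_dvd' (by omega)).mp hmod.symm
    have h1 : q ≤ p - 1 := Nat.le_of_dvd (by omega) hdvd
    omega
  -- basic divisibilities
  have hdp : p ∣ p ^ 2 * q := ⟨p * q, by ring⟩
  have hdq : q ∣ p ^ 2 * q := ⟨p ^ 2, by ring⟩
  have hdp2 : p ^ 2 ∣ p ^ 2 * q := ⟨q, rfl⟩
  have hcop : Nat.Coprime p q := (Nat.coprime_primes hp hq).mpr hpq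
  -- cardinality of G
  have hbij : Function.Bijective
      (fun g : G => holSmul (g : Hol (Multiplicative (ZMod (p ^ 2 * q)))) 1) := by
    constructor
    · intro g₁ g₂ hgg
      exact (hreg 1 (holSmul (g₂ : Hol (Multiplicative (ZMod (p ^ 2 * q)))) 1)).unique hgg rfl
    · intro y
      obtain ⟨g, hg, -⟩ := hreg 1 y
      exact ⟨g, hg⟩
  have hcardA : Nat.card (Multiplicative (ZMod (p ^ 2 * q))) = p ^ 2 * q := by
    rw [Nat.card_congr Multiplicative.toAdd, Nat.card_eq_fintype_card, ZMod.card]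
  have hcardG : Nat.card G = p ^ 2 * q := by
    rw [Nat.card_eq_of_bijective _ hbij, hcardA]
  haveI hGfin : Finite G := (Nat.card_ne_zero.mp (by rw [hcardG]; positivity)).2
  -- freeness
  have hfree : ∀ (g : G) (x : Multiplicative (ZMod (p ^ 2 * q))),
      holSmul (g : Hol (Multiplicative (ZMod (p ^ 2 * q)))) x = x → g = 1 := by
    intro g x hx
    refine (hreg x x).unique hx ?_
    simp [holSmul]
  -- the projection restricted to G
  set ρ : G →* MulAut (Multiplicative (ZMod (p ^ 2 * q))) :=
    SemidirectProduct.rightHom.comp G.subtype with hρdef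
  have hρrange : ρ.range = G.map SemidirectProduct.rightHom := by
    ext x
    simp only [MonoidHom.mem_range, Subgroup.mem_map, hρdef, MonoidHom.comp_apply]
    constructor
    · rintro ⟨g, rfl⟩; exact ⟨g, g.2, rfl⟩
    · rintro ⟨y, hy, rfl⟩; exact ⟨⟨y, hy⟩, rfl⟩
  haveI hRfin : Finite ρ.range := by
    rw [hρrange]
    exact (Nat.card_ne_zero.mp (by rw [hcard]; positivity)).2
  have hcardRange : Nat.card ρ.range = p * q := by rw [hρrange, hcard]
  -- kernel has cardinality p
  have hker_card : Nat.card ρ.ker = p := by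
    have h1 := Subgroup.card_eq_card_quotient_mul_card_subgroup ρ.ker
    rw [hcardG, Nat.card_congr (QuotientGroup.quotientKerEquivRange ρ).toEquiv,
      hcardRange] at h1
    have h2 : p * q * p = p * q * Nat.card ρ.ker := by
      rw [← h1]; ring
    exact (Nat.eq_of_mul_eq_mul_left (by positivity) h2).symm
  have hker_pow : ∀ t : G, ρ t = 1 → t ^ p = 1 := by
    intro t ht
    have hmem : t ∈ ρ.ker := ht
    have h1 : (⟨t, hmem⟩ : ρ.ker) ^ Nat.card ρ.ker = 1 := pow_card_eq_one'
    rw [hker_card] at h1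
    exact Subtype.ext_iff.mp h1
  -- Cauchy: elements of order p and q in the image
  obtain ⟨w, hw⟩ := exists_prime_orderOf_dvd_card' (G := ρ.range) p
    (by rw [hcardRange]; exact ⟨q, rfl⟩)
  obtain ⟨w', hw'⟩ := exists_prime_orderOf_dvd_card' (G := ρ.range) q
    (by rw [hcardRange]; exact ⟨p, mul_comm p q⟩)
  -- shorthand
  have hvalid : ∀ x : ZMod (p ^ 2 * q), ((x.val : ℕ) : ZMod (p ^ 2 * q)) = x :=
    fun x => by rw [ZMod.natCast_val, ZMod.cast_id]
  have hright : ∀ g : G, (g : Hol (Multiplicative (ZMod (p ^ 2 * q)))).right = ρ g :=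
    fun g => rfl
  -- construct k of p-power order with nontrivial image
  obtain ⟨K0, hK0⟩ := MonoidHom.mem_range.mp w.2
  set k : G := K0 ^ (q ^ 2) with hkdef
  have hkp2 : k ^ (p ^ 2) = 1 := by
    have h1 : K0 ^ (p ^ 2 * q) = 1 := by
      have := pow_card_eq_one' (x := K0)
      rwa [hcardG] at this
    have h2 : k ^ (p ^ 2) = (K0 ^ (p ^ 2 * q)) ^ q := by
      rw [hkdef, ← pow_mul, ← pow_mul]; ring_nf
    rw [h2, h1, one_pow]
  have hvne : ρ k ≠ 1 := by
    intro h
    have h1 : w ^ (q ^ 2) = 1 := by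
      apply Subtype.ext
      rw [SubgroupClass.coe_pow]
      have : ρ k = (w : MulAut (Multiplicative (ZMod (p ^ 2 * q)))) ^ (q ^ 2) := by
        rw [hkdef, map_pow, hK0]
      rw [← this, h]; rfl
    have h2 : p ∣ q ^ 2 := hw ▸ orderOf_dvd_of_pow_eq_one h1
    have h3 : p ∣ q := hp.dvd_of_dvd_pow h2
    exact hpq ((Nat.prime_dvd_prime_iff_eq hp hq).mp h3)
  set v : ZMod (p ^ 2 * q) := uu (k : Hol (Multiplicative (ZMod (p ^ 2 * q)))) with hvdef
  have hkcoe_pow : ((k : Hol (Multiplicative (ZMod (p ^ 2 * q)))) ^ (p ^ 2)) = 1 := by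
    rw [← SubgroupClass.coe_pow, hkp2]; rfl
  have hv_pow : v ^ (p ^ 2) = 1 := by
    rw [hvdef, ← uu_pow, hkcoe_pow, uu_one]
  have hv_ne : v ≠ 1 := by
    intro h
    exact hvne (by rw [← hright, right_eq_one_of_uu h])
  -- construct H0 with image of order q
  obtain ⟨H0, hH0⟩ := MonoidHom.mem_range.mp w'.2
  set u : ZMod (p ^ 2 * q) := uu (H0 : Hol (Multiplicative (ZMod (p ^ 2 * q)))) with hudef
  have hu_pow : u ^ q = 1 := by
    have hws : w' ^ q = 1 := orderOf_dvd_iff_pow_eq_one.mp (by rw [hw'])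
    have h1 : ρ (H0 ^ q) = 1 := by
      rw [map_pow, hH0, ← SubgroupClass.coe_pow, hws]; rfl
    rw [hudef, ← uu_pow, ← SubgroupClass.coe_pow]
    show uval _ = 1
    rw [hright, h1, uval_one]
  have hu_ne : u ≠ 1 := by
    intro h
    have h1 : ρ H0 = 1 := by rw [← hright, right_eq_one_of_uu h]
    have h2 : w' = 1 := Subtype.ext (by rw [← hH0, h1]; rfl)
    rw [h2, orderOf_one] at hw'
    omega
  -- the commutator t = H0 * k * H0⁻¹ * k⁻¹ is a translation
  set g1 : Hol (Multiplicative (ZMod (p ^ 2 * q))) := (H0 : Hol (Multiplicative (ZMod (p ^ 2 * q)))) with hg1def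
  set g2 : Hol (Multiplicative (ZMod (p ^ 2 * q))) := (k : Hol (Multiplicative (ZMod (p ^ 2 * q)))) with hg2def
  set x1 : ZMod (p ^ 2 * q) := uu g1⁻¹ with hx1def
  set y1 : ZMod (p ^ 2 * q) := uu g2⁻¹ with hy1def
  have hx : x1 * u = 1 := uu_inv_mul g1
  have hy : y1 * v = 1 := uu_inv_mul g2
  set t : G := H0 * k * H0⁻¹ * k⁻¹ with htdef
  have htcoe : (t : Hol (Multiplicative (ZMod (p ^ 2 * q)))) = g1 * g2 * g1⁻¹ * g2⁻¹ := by
    push_cast [htdef]; rfl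
  have hUt : uu (t : Hol (Multiplicative (ZMod (p ^ 2 * q)))) = 1 := by
    rw [htcoe, uu_mul, uu_mul, uu_mul, ← hudef, ← hvdef, ← hx1def, ← hy1def]
    linear_combination v * y1 * hx + hy
  have htright : ρ t = 1 := by
    apply uval_inj
    rw [uval_one, ← hright]
    exact hUt
  -- scalars
  set b : ZMod (p ^ 2 * q) := aA g1 with hbdef
  set c : ZMod (p ^ 2 * q) := aA g2 with hcdef
  set τ : ZMod (p ^ 2 * q) := aA (t : Hol (Multiplicative (ZMod (p ^ 2 * q)))) with hτdef
  have hτp : (p : ZMod (p ^ 2 * q)) * τ = 0 := by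
    have h0 := aA_pow_mod (RingHom.id (ZMod (p ^ 2 * q)))
      (t : Hol (Multiplicative (ZMod (p ^ 2 * q)))) (by simpa using hUt) p
    have h1 : ((t : Hol (Multiplicative (ZMod (p ^ 2 * q)))) ^ p) = 1 := by
      rw [← SubgroupClass.coe_pow, hker_pow t htright]; rfl
    rw [h1] at h0
    simpa [aA_one] using h0.symm
  have hτeq : τ = (u - 1) * c - (v - 1) * b := by
    have hexp : τ = b + u * c + u * v * (x1 * (-b)) + (u * v * x1) * (y1 * (-c)) := by
      simp only [hτdef, htcoe, aA_mul, uu_mul, aA_inv]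
      try ring
    linear_combination hexp - (v * b + c) * hx - u * x1 * c * hy
  -- cast homomorphisms
  set ψp := ZMod.castHom hdp (ZMod p) with hψpdef
  set ψq := ZMod.castHom hdq (ZMod q) with hψqdef
  set ψ2 := ZMod.castHom hdp2 (ZMod (p ^ 2)) with hψ2def
  -- (a) v ≡ 1 mod q
  have hvq1 : ψq v = 1 := by
    have h0 : (ψq v) ^ (p ^ 2) = 1 := by rw [← map_pow, hv_pow, map_one]
    have hy0 : ψq v ≠ 0 := by
      intro h
      rw [h, zero_pow (by positivity)] at h0
      exact zero_ne_one h0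
    have h1 : (ψq v) ^ (q - 1) = 1 := ZMod.pow_card_sub_one_eq_one hy0
    have h2 : orderOf (ψq v) ∣ p ^ 2 := orderOf_dvd_of_pow_eq_one h0
    have h3 : orderOf (ψq v) ∣ q - 1 := orderOf_dvd_of_pow_eq_one h1
    have hcop2 : Nat.Coprime (p ^ 2) (q - 1) := by
      apply Nat.Coprime.pow_left
      rw [hp.coprime_iff_not_dvd]
      intro hdvd
      have := Nat.le_of_dvd (by omega) hdvd
      omega
    have h4 : orderOf (ψq v) ∣ 1 := hcop2 ▸ Nat.dvd_gcd h2 h3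
    rw [← orderOf_eq_one_iff]
    exact Nat.eq_one_of_dvd_one h4
  -- (b) v ≡ 1 mod p
  have hvp1 : ψp v = 1 := by
    have h0 : (ψp v) ^ (p ^ 2) = 1 := by rw [← map_pow, hv_pow, map_one]
    rwa [ZMod.pow_card_pow] at h0
  -- (c) u ≡ 1 mod q
  have huq1 : ψq u = 1 := by
    have h0 : (ψq u) ^ q = 1 := by rw [← map_pow, hu_pow, map_one]
    rwa [ZMod.pow_card] at h0
  -- (d) u is not 1 mod p
  have hupne : ψp u ≠ 1 := by
    intro h1
    have hdvdp : p ∣ (u - 1).val := by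
      rw [← dvd_val_iff hdp]
      rw [map_sub, h1, map_one, sub_self]
    set x := ψ2 (u - 1) with hxdef
    have hx2 : x ^ 2 = 0 := by
      obtain ⟨d, hd⟩ := hdvdp
      have hxd : x = ((p * d : ℕ) : ZMod (p ^ 2)) := by
        rw [hxdef, castHom_nat hdp2, hd]
      have hp20 : ((p : ZMod (p ^ 2))) ^ 2 = 0 := by
        rw [← Nat.cast_pow, ZMod.natCast_self]
      rw [hxd]
      push_cast
      linear_combination ((d : ZMod (p ^ 2))) ^ 2 * hp20
    have hsplit : ψ2 u = 1 + x := by rw [hxdef, map_sub, map_one]; ring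
    have h2 : (1 + x) ^ q = 1 := by rw [← hsplit, ← map_pow, hu_pow, map_one]
    rw [one_add_nilsq_pow x hx2 q] at h2
    have h3 : (q : ZMod (p ^ 2)) * x = 0 := by linear_combination h2
    have hqu : IsUnit (q : ZMod (p ^ 2)) :=
      (ZMod.isUnit_iff_coprime q (p ^ 2)).mpr (hcop.symm.pow_right 2)
    have hx0 : x = 0 := (IsUnit.mul_right_eq_zero hqu).mp h3
    have hdvdp2 : p ^ 2 ∣ (u - 1).val := by
      rw [← dvd_val_iff hdp2]; exact hx0
    have hdvdq : q ∣ (u - 1).val := by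
      rw [← dvd_val_iff hdq, map_sub, huq1, map_one, sub_self]
    have hdvdN : p ^ 2 * q ∣ (u - 1).val :=
      (hcop.pow_left 2).mul_dvd_of_dvd_of_dvd hdvdp2 hdvdq
    have : u - 1 = 0 := by
      rw [← hvalid (u - 1)]
      exact (ZMod.natCast_eq_zero_iff _ _).mpr hdvdN
    exact hu_ne (by linear_combination this)
  -- (e) q ∣ c.val
  have hqc : q ∣ c.val := by
    have h1 := aA_pow_mod ψq g2 (by rw [← hvdef]; exact hvq1) (p ^ 2)
    rw [hkcoe_pow] at h1
    have h2 : ((p : ZMod q)) ^ 2 * ψq c = 0 := by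
      rw [← hcdef] at h1
      simpa [aA_one] using h1.symm
    have hpq0 : (p : ZMod q) ≠ 0 := by
      rw [Ne, ZMod.natCast_eq_zero_iff]
      intro hdvd
      exact hpq ((Nat.prime_dvd_prime_iff_eq hq hp).mp hdvd).symm
    have h3 : ψq c = 0 := by
      rcases mul_eq_zero.mp h2 with h | h
      · exact absurd h (pow_ne_zero 2 hpq0)
      · exact h
    rw [← dvd_val_iff hdq]; exact h3
  -- (f) p ∣ τ.val
  have hpτ : p ∣ τ.val := by
    have h1 : ((p * τ.val : ℕ) : ZMod (p ^ 2 * q)) = 0 := by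
      push_cast
      rw [hvalid]
      exact hτp
    have h2 : p ^ 2 * q ∣ p * τ.val := (ZMod.natCast_eq_zero_iff _ _).mp h1
    have h3 : p * (p * q) ∣ p * τ.val := by
      have : p * (p * q) = p ^ 2 * q := by ring
      rwa [this]
    have h4 : p * q ∣ τ.val := (Nat.mul_dvd_mul_iff_left (by omega : 0 < p)).mp h3
    exact dvd_trans ⟨q, rfl⟩ h4
  -- (g) p ∣ c.val
  have hpc : p ∣ c.val := by
    have h0 : ψp τ = 0 := (dvd_val_iff hdp τ).mpr hpτ
    rw [hτeq, map_sub, map_mul, map_mul, map_sub, map_sub, map_one, hvp1, sub_self,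
      zero_mul, sub_zero] at h0
    have h2 : ψp c = 0 := by
      rcases mul_eq_zero.mp h0 with h | h
      · exact absurd (by linear_combination h) hupne
      · exact h
    rw [← dvd_val_iff hdp]; exact h2
  have hps : (p : ZMod (p ^ 2 * q)) ^ 2 * (q : ZMod (p ^ 2 * q)) = 0 := by
    have h := ZMod.natCast_self (p ^ 2 * q)
    push_cast at h
    linear_combination h
  -- decompose c and v - 1
  obtain ⟨r0, hr0⟩ : p * q ∣ c.val := hcop.mul_dvd_of_dvd_of_dvd hpc hqc
  set r : ZMod (p ^ 2 * q) := (r0 : ZMod (p ^ 2 * q)) with hrdef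
  set P : ZMod (p ^ 2 * q) := ((p * q : ℕ) : ZMod (p ^ 2 * q)) with hPdef
  have hc : c = P * r := by
    rw [← hvalid c, hr0, hPdef]; push_cast; ring
  have hpv : p ∣ (v - 1).val := by
    rw [← dvd_val_iff hdp, map_sub, hvp1, map_one, sub_self]
  have hqv : q ∣ (v - 1).val := by
    rw [← dvd_val_iff hdq, map_sub, hvq1, map_one, sub_self]
  obtain ⟨s0, hs0⟩ : p * q ∣ (v - 1).val := hcop.mul_dvd_of_dvd_of_dvd hpv hqv
  set s : ZMod (p ^ 2 * q) := (s0 : ZMod (p ^ 2 * q)) with hsdef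
  have hv1 : v - 1 = P * s := by
    rw [← hvalid (v - 1), hs0, hPdef]; push_cast; ring
  -- s is invertible mod p
  have hsne : ψp s ≠ 0 := by
    intro h
    obtain ⟨e, he⟩ : p ∣ s.val := (dvd_val_iff hdp s).mp h
    have hv0 : v - 1 = 0 := by
      rw [hv1, ← hvalid s, he, hPdef]
      push_cast
      linear_combination (e : ZMod (p ^ 2 * q)) * hps
    exact hv_ne (by linear_combination hv0)
  set z : ZMod p := (ψp s)⁻¹ with hzdef
  set s' : ZMod (p ^ 2 * q) := ((z.val : ℕ) : ZMod (p ^ 2 * q)) with hs'def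
  have hss' : P * (s * s') = P := by
    haveI : NeZero p := ⟨by omega⟩
    have hz : ψp s' = z := by
      rw [hs'def, map_natCast, ZMod.natCast_val, ZMod.cast_id]
    have h1 : ψp (s * s' - 1) = 0 := by
      rw [map_sub, map_mul, map_one, hz, hzdef, mul_inv_cancel₀ hsne, sub_self]
    obtain ⟨j, hj⟩ : p ∣ (s * s' - 1).val := (dvd_val_iff hdp _).mp h1
    have h2 : s * s' = 1 + ((p * j : ℕ) : ZMod (p ^ 2 * q)) := by
      have := hvalid (s * s' - 1)
      rw [hj] at this
      linear_combination - this
    rw [h2, hPdef]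
    push_cast
    linear_combination (j : ZMod (p ^ 2 * q)) * hps
  -- fixed point of k
  set ξ : ZMod (p ^ 2 * q) := -(r * s') with hξdef
  have hfix : holSmul g2 (Multiplicative.ofAdd ξ) = Multiplicative.ofAdd ξ := by
    apply Multiplicative.toAdd.injective
    rw [holSmul_toAdd, ← hcdef, ← hvdef]
    show c + v * ξ = ξ
    linear_combination hc + ξ * hv1 - r * hss'
  have hk1 : k = 1 := hfree k _ hfix
  exact hvne (by rw [hk1, map_one])
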